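/- Let b > 0 and let g be a non-negative decreasing convex function on [0, b] with g(b) = 0 and |g(z) − g(w)| ≤ |z − w|/2 for all z, w ∈ [0, b]. Then ⌊g(0)+1/4⌋ + 2·Σ_{m=1}^{⌊b⌋} ⌊g(m)+1/4⌋ ≤ 2·∫₀^b g(z) dz, with equality only if g is identically zero on [0, b]. -/

import Mathlib

open MeasureTheory intervalIntegral Set

private lemma lip_cont {b : ℝ} {g : ℝ → ℝ}
    (hlip : ∀ z ∈ Set.Icc (0:ℝ) b, ∀ w ∈ Set.Icc (0:ℝ) b, |g z - g w| ≤ |z - w| / 2) :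
    ContinuousOn g (Set.Icc 0 b) := by
  have h : LipschitzOnWith (1/2 : NNReal) g (Set.Icc 0 b) := by
    rw [lipschitzOnWith_iff_dist_le_mul]
    intro x hx y hy
    rw [Real.dist_eq, Real.dist_eq]
    have h2 := hlip x hx y hy
    have : ((1/2 : NNReal) : ℝ) = 1/2 := by norm_num
    rw [this]
    linarith
  exact h.continuousOn

private lemma intInt {b : ℝ} {f : ℝ → ℝ} (hf : ContinuousOn f (Set.Icc 0 b))
    {x y : ℝ} (hx : 0 ≤ x) (hxy : x ≤ y) (hy : y ≤ b) :
    IntervalIntegrable f MeasureTheory.volume x y :=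
  (hf.mono (by rw [Set.uIcc_of_le hxy]; exact Set.Icc_subset_Icc hx hy)).intervalIntegrable

private lemma contClip {b : ℝ} {g : ℝ → ℝ} (hg : ContinuousOn g (Set.Icc 0 b)) (d : ℝ) :
    ContinuousOn (fun z => min 1 (max 0 (g z - d))) (Set.Icc 0 b) :=
  continuousOn_const.inf (continuousOn_const.sup (hg.sub continuousOn_const))

private lemma contMax0 {b : ℝ} {g : ℝ → ℝ} (hg : ContinuousOn g (Set.Icc 0 b)) (d : ℝ) :
    ContinuousOn (fun z => max 0 (g z - d)) (Set.Icc 0 b) :=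
  continuousOn_const.sup (hg.sub continuousOn_const)

private lemma contMax0' {b : ℝ} {g : ℝ → ℝ} (hg : ContinuousOn g (Set.Icc 0 b)) (d : ℝ) :
    ContinuousOn (fun z => max 0 (d - g z)) (Set.Icc 0 b) :=
  continuousOn_const.sup (continuousOn_const.sub hg)
private lemma sub_lemma {b : ℝ} {g : ℝ → ℝ} (hb : 0 < b)
    (hconv : ConvexOn ℝ (Set.Icc (0:ℝ) b) g)
    (hlip : ∀ z ∈ Set.Icc (0:ℝ) b, ∀ w ∈ Set.Icc (0:ℝ) b, |g z - g w| ≤ |z - w| / 2)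
    {c : ℝ} (hc0 : 0 < c) (hcb : c < b) :
    ∃ s : ℝ, -(1/2) ≤ s ∧ s ≤ (g b - g c) / (b - c) ∧
      ∀ z ∈ Set.Icc (0:ℝ) b, g c + s * (z - c) ≤ g z := by
  have hcI : c ∈ Set.Icc (0:ℝ) b := ⟨le_of_lt hc0, le_of_lt hcb⟩
  have hbI : b ∈ Set.Icc (0:ℝ) b := ⟨le_of_lt hb, le_refl b⟩
  set S : Set ℝ := (fun w => (g w - g c) / (w - c)) '' Set.Ioc c b with hS
  have hne : S.Nonempty := ⟨_, ⟨b, ⟨hcb, le_refl b⟩, rfl⟩⟩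
  have hlb : ∀ r ∈ S, -(1/2) ≤ r := by
    rintro r ⟨w, hw, rfl⟩
    have hwI : w ∈ Set.Icc (0:ℝ) b := ⟨le_trans (le_of_lt hc0) (le_of_lt hw.1), hw.2⟩
    have h1 := hlip w hwI c hcI
    have hwc : 0 < w - c := by linarith [hw.1]
    rw [abs_of_pos hwc] at h1
    have h2 : -( (w - c) / 2) ≤ g w - g c := by
      have := neg_abs_le (g w - g c); linarith
    show -(1/2) ≤ (g w - g c) / (w - c)
    rw [le_div_iff₀ hwc]
    linarith
  have hbdd : BddBelow S := ⟨-(1/2), hlb⟩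
  refine ⟨sInf S, le_csInf hne hlb, csInf_le hbdd ⟨b, ⟨hcb, le_refl b⟩, rfl⟩, ?_⟩
  intro z hz
  rcases lt_trichotomy z c with hzc | hzc | hzc
  · have key : (g c - g z) / (c - z) ≤ sInf S := by
      apply le_csInf hne
      rintro r ⟨w, hw, rfl⟩
      have hwI : w ∈ Set.Icc (0:ℝ) b := ⟨le_trans (le_of_lt hc0) (le_of_lt hw.1), hw.2⟩
      have := hconv.slope_mono_adjacent hz hwI hzc hw.1
      simpa [slope_def_field] using this
    have hcz : 0 < c - z := by linarith
    rw [div_le_iff₀ hcz] at key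
    nlinarith
  · subst hzc; simp
  · have key : sInf S ≤ (g z - g c) / (z - c) := csInf_le hbdd ⟨z, ⟨hzc, hz.2⟩, rfl⟩
    have hzc' : 0 < z - c := by linarith
    rw [le_div_iff₀ hzc'] at key
    linarith
private lemma clip_lemma {b : ℝ} {g : ℝ → ℝ} (hb : 0 < b) (hgb : g b = 0)
    (hcont : ContinuousOn g (Set.Icc 0 b))
    {c σ μ : ℝ} (hc0 : 0 ≤ c) (hσ0 : 0 < σ) (hμ : 1/2 ≤ μ)
    (hline : ∀ z ∈ Set.Icc (0:ℝ) b, μ - σ * (z - c) ≤ g z) :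
    c ≤ ∫ z in (0:ℝ)..b, min 1 (max 0 (g z - (μ - 1/2))) := by
  have hbI : b ∈ Set.Icc (0:ℝ) b := ⟨le_of_lt hb, le_refl b⟩
  have hfit : 1/(2*σ) ≤ b - c := by
    have h1 := hline b hbI
    rw [hgb] at h1
    rw [div_le_iff₀ (by positivity)]
    nlinarith
  have hcb : c ≤ b := by
    have : 0 < 1/(2*σ) := by positivity
    linarith
  set f : ℝ → ℝ := fun t => max 0 (1/2 - σ * t) with hf
  have hfc : Continuous f := continuous_const.max (continuous_const.sub (continuous_const.mul continuous_id))
  have hfnn : ∀ t, 0 ≤ f t := fun t => le_max_left _ _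
  have hfzero : ∀ t, 1/(2*σ) ≤ t → f t = 0 := by
    intro t ht
    rw [div_le_iff₀ (by positivity)] at ht
    simp only [hf, max_eq_left_iff]
    nlinarith
  -- v is the clipped line
  set v : ℝ → ℝ := fun z => min 1 (max 0 (1/2 - σ * (z - c))) with hv
  have hvc : Continuous v := continuous_const.min
    (continuous_const.max (continuous_const.sub (continuous_const.mul (continuous_id.sub continuous_const))))
  have hvle : ∀ z ∈ Set.Icc (0:ℝ) b, v z ≤ min 1 (max 0 (g z - (μ - 1/2))) := by
    intro z hz
    have h1 := hline z hz
    exact min_le_min (le_refl 1) (max_le_max (le_refl 0) (by linarith))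
  have hIc : IntervalIntegrable (fun z => min 1 (max 0 (g z - (μ - 1/2)))) MeasureTheory.volume 0 b :=
    intInt (contClip hcont _) (le_refl 0) (le_of_lt hb) (le_refl b)
  have hIv : IntervalIntegrable v MeasureTheory.volume 0 b := hvc.intervalIntegrable _ _
  have step1 : (∫ z in (0:ℝ)..b, v z) ≤ ∫ z in (0:ℝ)..b, min 1 (max 0 (g z - (μ - 1/2))) :=
    intervalIntegral.integral_mono_on (le_of_lt hb) hIv hIc hvle
  -- split ∫ v at c
  have hsplit : (∫ z in (0:ℝ)..c, v z) + (∫ z in c..b, v z) = ∫ z in (0:ℝ)..b, v z :=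
    intervalIntegral.integral_add_adjacent_intervals (hvc.intervalIntegrable _ _) (hvc.intervalIntegrable _ _)
  -- right part
  have hright : (∫ z in c..b, v z) = ∫ t in (0:ℝ)..(b - c), f t := by
    have hcongr : ∀ z ∈ Set.uIcc c b, v z = f (z - c) := by
      intro z hz
      rw [Set.uIcc_of_le hcb] at hz
      have h1 : 1/2 - σ * (z - c) ≤ 1/2 := by nlinarith [hz.1]
      simp only [hv, hf]
      rw [min_eq_right]
      exact le_trans (max_le (by norm_num) h1) (by norm_num)
    rw [intervalIntegral.integral_congr hcongr]
    have := intervalIntegral.integral_comp_sub_right (a := c) (b := b) f c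
    simpa using this
  -- left part
  have hleft : (∫ z in (0:ℝ)..c, v z) = c - ∫ t in (0:ℝ)..c, f t := by
    have hcongr : ∀ z ∈ Set.uIcc 0 c, v z = 1 - f (c - z) := by
      intro z hz
      rw [Set.uIcc_of_le hc0] at hz
      have hzc : 0 ≤ c - z := by linarith [hz.2]
      have h1 : 0 ≤ σ * (c - z) := mul_nonneg hσ0.le hzc
      have e : σ * (z - c) = -(σ * (c - z)) := by ring
      simp only [hv, hf, e]
      rcases le_total (σ * (c - z)) (1/2) with h | h
      · rw [max_eq_right (by linarith : (0:ℝ) ≤ 1/2 - σ * (c - z)),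
            max_eq_right (by linarith : (0:ℝ) ≤ 1/2 - -(σ * (c - z))),
            min_eq_right (by linarith : 1/2 - -(σ * (c - z)) ≤ 1)]
        ring
      · rw [max_eq_left (by linarith : 1/2 - σ * (c - z) ≤ 0),
            max_eq_right (by linarith : (0:ℝ) ≤ 1/2 - -(σ * (c - z))),
            min_eq_left (by linarith : (1:ℝ) ≤ 1/2 - -(σ * (c - z)))]
        ring
    rw [intervalIntegral.integral_congr hcongr]
    have hI2 : IntervalIntegrable (fun z : ℝ => f (c - z)) MeasureTheory.volume 0 c :=
      Continuous.intervalIntegrable (hfc.comp (continuous_const.sub continuous_id)) _ _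
    rw [intervalIntegral.integral_sub intervalIntegrable_const hI2]
    have h2 : (∫ z in (0:ℝ)..c, f (c - z)) = ∫ t in (0:ℝ)..c, f t := by
      have := intervalIntegral.integral_comp_sub_left (a := (0:ℝ)) (b := c) f c
      simpa using this
    rw [h2]
    simp
  -- compare the two f-integrals
  have hcomp : (∫ t in (0:ℝ)..c, f t) ≤ ∫ t in (0:ℝ)..(b - c), f t := by
    rcases le_total c (b - c) with h | h
    · have : (∫ t in (0:ℝ)..c, f t) + (∫ t in c..(b-c), f t) = ∫ t in (0:ℝ)..(b-c), f t :=
        intervalIntegral.integral_add_adjacent_intervals (hfc.intervalIntegrable _ _) (hfc.intervalIntegrable _ _)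
      have h2 : 0 ≤ ∫ t in c..(b-c), f t :=
        intervalIntegral.integral_nonneg h (fun u _ => hfnn u)
      linarith
    · have : (∫ t in (0:ℝ)..(b-c), f t) + (∫ t in (b-c)..c, f t) = ∫ t in (0:ℝ)..c, f t :=
        intervalIntegral.integral_add_adjacent_intervals (hfc.intervalIntegrable _ _) (hfc.intervalIntegrable _ _)
      have h2 : (∫ t in (b-c)..c, f t) = 0 := by
        have hcongr : ∀ t ∈ Set.uIcc (b-c) c, f t = (fun _ => (0:ℝ)) t := by
          intro t ht
          rw [Set.uIcc_of_le h] at ht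
          exact hfzero t (le_trans hfit ht.1)
        rw [intervalIntegral.integral_congr hcongr]
        simp
      linarith
  linarith [step1, hsplit, hright, hleft, hcomp]
private lemma b1_lemma {b : ℝ} {g : ℝ → ℝ} (hb : 0 < b) (hgb : g b = 0)
    (hcont : ContinuousOn g (Set.Icc 0 b))
    (hnn : ∀ z ∈ Set.Icc (0:ℝ) b, 0 ≤ g z)
    {c σ : ℝ} (hc0 : 0 ≤ c) (hσ0 : 0 < σ) (hσh : σ ≤ 1/2)
    (hlow : ∀ z ∈ Set.Icc (0:ℝ) b, z ≤ c → 1/4 ≤ g z)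
    (hline : ∀ z ∈ Set.Icc (0:ℝ) b, 1/4 - σ * (z - c) ≤ g z) :
    (∫ z in (0:ℝ)..b, max 0 (1/4 - g z)) ≤ (b - c)/4 - 1/16 := by
  have hbI : b ∈ Set.Icc (0:ℝ) b := ⟨le_of_lt hb, le_refl b⟩
  have hfit : 1/(4*σ) ≤ b - c := by
    have h1 := hline b hbI
    rw [hgb] at h1
    rw [div_le_iff₀ (by positivity)]
    nlinarith
  have hcb : c ≤ b := by
    have : 0 < 1/(4*σ) := by positivity
    linarith
  have hIg : IntervalIntegrable (fun z => max 0 (1/4 - g z)) MeasureTheory.volume 0 b :=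
    intInt (contMax0' hcont _) (le_refl 0) (le_of_lt hb) (le_refl b)
  have hsplit : (∫ z in (0:ℝ)..c, max 0 (1/4 - g z)) + (∫ z in c..b, max 0 (1/4 - g z))
      = ∫ z in (0:ℝ)..b, max 0 (1/4 - g z) :=
    intervalIntegral.integral_add_adjacent_intervals
      (intInt (contMax0' hcont _) (le_refl 0) hc0 hcb)
      (intInt (contMax0' hcont _) hc0 hcb (le_refl b))
  have hleft : (∫ z in (0:ℝ)..c, max 0 (1/4 - g z)) = 0 := by
    have hcongr : ∀ z ∈ Set.uIcc 0 c, max 0 (1/4 - g z) = (fun _ => (0:ℝ)) z := by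
      intro z hz
      rw [Set.uIcc_of_le hc0] at hz
      have := hlow z ⟨hz.1, le_trans hz.2 hcb⟩ hz.2
      exact max_eq_left (by linarith)
    rw [intervalIntegral.integral_congr hcongr]
    simp
  set w : ℝ → ℝ := fun z => 1/4 - max 0 (1/4 - σ * (z - c)) with hw
  have hwc : Continuous w := continuous_const.sub
    (continuous_const.max (continuous_const.sub (continuous_const.mul (continuous_id.sub continuous_const))))
  have hright : (∫ z in c..b, max 0 (1/4 - g z)) ≤ ∫ z in c..b, w z := by
    apply intervalIntegral.integral_mono_on hcb
      (intInt (contMax0' hcont _) hc0 hcb (le_refl b)) (hwc.intervalIntegrable _ _)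
    intro z hz
    have hzI : z ∈ Set.Icc (0:ℝ) b := ⟨le_trans hc0 hz.1, hz.2⟩
    have h1 := hline z hzI
    have h2 := hnn z hzI
    have h0 : 0 ≤ σ * (z - c) := mul_nonneg hσ0.le (by linarith [hz.1])
    simp only [hw]
    rcases le_total (1/4 - σ * (z - c)) 0 with h | h
    · rw [max_eq_left h]
      exact max_le (by norm_num) (by linarith)
    · rw [max_eq_right h]
      exact max_le (by linarith) (by linarith)
  have hwint : (∫ z in c..b, w z) = (b - c)/4 - ∫ t in (0:ℝ)..(b - c), max 0 (1/4 - σ * t) := by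
    have hfc : Continuous (fun t : ℝ => max 0 (1/4 - σ * t)) :=
      continuous_const.max (continuous_const.sub (continuous_const.mul continuous_id))
    have hI2 : IntervalIntegrable (fun z : ℝ => max 0 (1/4 - σ * (z - c))) MeasureTheory.volume c b :=
      Continuous.intervalIntegrable
        (continuous_const.max (continuous_const.sub (continuous_const.mul (continuous_id.sub continuous_const)))) _ _
    rw [hw]
    rw [intervalIntegral.integral_sub intervalIntegrable_const hI2]
    have h3 : (∫ z in c..b, max 0 (1/4 - σ * (z - c))) = ∫ t in (0:ℝ)..(b - c), max 0 (1/4 - σ * t) := by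
      have := intervalIntegral.integral_comp_sub_right (a := c) (b := b)
        (fun t : ℝ => max 0 (1/4 - σ * t)) c
      simpa using this
    rw [h3]
    simp
    ring
  have hramp : 1/16 ≤ ∫ t in (0:ℝ)..(b - c), max 0 (1/4 - σ * t) := by
    have hfc : Continuous (fun t : ℝ => max 0 (1/4 - σ * t)) :=
      continuous_const.max (continuous_const.sub (continuous_const.mul continuous_id))
    set r : ℝ := 1/(4*σ) with hr
    have hr0 : 0 ≤ r := by positivity
    have hs : (∫ t in (0:ℝ)..r, max 0 (1/4 - σ * t)) + (∫ t in r..(b-c), max 0 (1/4 - σ * t))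
        = ∫ t in (0:ℝ)..(b - c), max 0 (1/4 - σ * t) :=
      intervalIntegral.integral_add_adjacent_intervals (hfc.intervalIntegrable _ _) (hfc.intervalIntegrable _ _)
    have h4 : 0 ≤ ∫ t in r..(b-c), max 0 (1/4 - σ * t) :=
      intervalIntegral.integral_nonneg hfit (fun u _ => le_max_left _ _)
    have h5 : (∫ t in (0:ℝ)..r, (1/4 - σ * t)) ≤ ∫ t in (0:ℝ)..r, max 0 (1/4 - σ * t) := by
      apply intervalIntegral.integral_mono_on hr0
        ((continuous_const.sub (continuous_const.mul continuous_id)).intervalIntegrable _ _)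
        (hfc.intervalIntegrable _ _)
      exact fun u _ => le_max_right _ _
    have h6 : (∫ t in (0:ℝ)..r, (1/4 - σ * t)) = 1/(32*σ) := by
      rw [intervalIntegral.integral_sub (g := fun t : ℝ => σ * t) intervalIntegrable_const
        (Continuous.intervalIntegrable (continuous_const.mul continuous_id') _ _)]
      rw [intervalIntegral.integral_const_mul]
      have hσ' : σ ≠ 0 := ne_of_gt hσ0
      rw [integral_id, intervalIntegral.integral_const, hr, smul_eq_mul]
      field_simp
      ring
    have h7 : 1/16 ≤ 1/(32*σ) := by
      rw [div_le_div_iff₀ (by norm_num) (by positivity)]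
      nlinarith
    linarith
  linarith

private lemma b2_lemma {b : ℝ} {g : ℝ → ℝ} (hb : 0 < b)
    (hcont : ContinuousOn g (Set.Icc 0 b))
    {lvl h : ℝ} (hh0 : 0 ≤ h) (hhb : 2*h ≤ b)
    (hpt : ∀ z ∈ Set.Icc (0:ℝ) b, h - z/2 ≤ g z - lvl) :
    h^2 ≤ ∫ z in (0:ℝ)..b, max 0 (g z - lvl) := by
  have hsplit : (∫ z in (0:ℝ)..(2*h), max 0 (g z - lvl)) + (∫ z in (2*h)..b, max 0 (g z - lvl))
      = ∫ z in (0:ℝ)..b, max 0 (g z - lvl) :=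
    intervalIntegral.integral_add_adjacent_intervals
      (intInt (contMax0 hcont _) (le_refl 0) (by linarith) hhb)
      (intInt (contMax0 hcont _) (by linarith) hhb (le_refl b))
  have h1 : 0 ≤ ∫ z in (2*h)..b, max 0 (g z - lvl) :=
    intervalIntegral.integral_nonneg hhb (fun u _ => le_max_left _ _)
  have h2 : (∫ z in (0:ℝ)..(2*h), (h - z/2)) ≤ ∫ z in (0:ℝ)..(2*h), max 0 (g z - lvl) := by
    apply intervalIntegral.integral_mono_on (by linarith)
      ((continuous_const.sub (continuous_id.div_const 2)).intervalIntegrable _ _)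
      (intInt (contMax0 hcont _) (le_refl 0) (by linarith) hhb)
    intro z hz
    have hzI : z ∈ Set.Icc (0:ℝ) b := ⟨hz.1, le_trans hz.2 hhb⟩
    exact le_trans (hpt z hzI) (le_max_right _ _)
  have h3 : (∫ z in (0:ℝ)..(2*h), (h - z/2)) = h^2 := by
    rw [intervalIntegral.integral_sub intervalIntegrable_const
      (Continuous.intervalIntegrable (continuous_id'.div_const 2) _ _)]
    have : (∫ z in (0:ℝ)..(2*h), z/2) = (∫ z in (0:ℝ)..(2*h), z)/2 := by
      rw [intervalIntegral.integral_div]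
    rw [this]
    simp [integral_id]
    ring
  linarith
private lemma clip_sum (y : ℝ) : ∀ n : ℕ,
    ∑ i ∈ Finset.range n, min 1 (max 0 (y - ((i:ℝ) + 1/4)))
      = y - 1/4 - max 0 (y - 1/4 - n) + max 0 (1/4 - y) := by
  intro n
  induction n with
  | zero =>
    simp only [Finset.sum_range_zero, Nat.cast_zero, sub_zero]
    rcases le_total y (1/4) with h | h
    · rw [max_eq_left (by linarith), max_eq_right (by linarith)]; ring
    · rw [max_eq_right (by linarith), max_eq_left (by linarith)]; ring
  | succ n ih =>
    rw [Finset.sum_range_succ, ih]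
    push_cast
    have key : min 1 (max 0 (y - ((n:ℝ) + 1/4)))
        = max 0 (y - 1/4 - n) - max 0 (y - 1/4 - (n + 1)) := by
      rcases le_total y ((n:ℝ) + 1/4) with h | h
      · rw [max_eq_left (by linarith), max_eq_left (by linarith),
          max_eq_left (by linarith), min_eq_right (by norm_num)]
        ring
      · rcases le_total y ((n:ℝ) + 5/4) with h2 | h2
        · rw [max_eq_right (by linarith), max_eq_right (by linarith),
            max_eq_left (by linarith), min_eq_right (by linarith)]
          ring
        · rw [max_eq_right (by linarith), max_eq_right (by linarith),
            max_eq_right (by linarith), min_eq_left (by linarith)]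
          ring
    rw [key]
    ring

private lemma count_lemma (a : ℤ) (h0 : 0 ≤ a) :
    ∀ n : ℕ, ∑ i ∈ Finset.range n, (if (i:ℤ) < a then (1:ℤ) else 0) = min a n := by
  intro n
  induction n with
  | zero => simp; omega
  | succ n ih =>
    rw [Finset.sum_range_succ, ih]
    by_cases h : (n:ℤ) < a
    · rw [if_pos h]; push_cast; omega
    · rw [if_neg h]; push_cast; omega

private lemma zero_lemma {b : ℝ} {g : ℝ → ℝ} (hb : 0 < b)
    (hnn : ∀ z ∈ Set.Icc (0:ℝ) b, 0 ≤ g z)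
    (hlip : ∀ z ∈ Set.Icc (0:ℝ) b, ∀ w ∈ Set.Icc (0:ℝ) b, |g z - g w| ≤ |z - w| / 2)
    (hgb : g b = 0)
    (hint : (∫ z in (0:ℝ)..b, g z) = 0) :
    ∀ z ∈ Set.Icc (0:ℝ) b, g z = 0 := by
  have hcont := lip_cont hlip
  intro z hz
  by_contra hne
  have hε : 0 < g z := lt_of_le_of_ne (hnn z hz) (Ne.symm hne)
  set ε := g z with hεdef
  have hbI : b ∈ Set.Icc (0:ℝ) b := ⟨le_of_lt hb, le_refl b⟩
  have hzb : z + 2*ε ≤ b := by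
    have h1 := hlip z hz b hbI
    rw [hgb, sub_zero, abs_of_nonneg (le_of_lt hε), abs_of_nonpos (by linarith [hz.2])] at h1
    linarith
  have hsp1 : (∫ w in (0:ℝ)..z, g w) + (∫ w in z..(z+ε), g w) = ∫ w in (0:ℝ)..(z+ε), g w :=
    intervalIntegral.integral_add_adjacent_intervals
      (intInt hcont (le_refl 0) hz.1 (by linarith))
      (intInt hcont hz.1 (by linarith) (by linarith))
  have hsp2 : (∫ w in (0:ℝ)..(z+ε), g w) + (∫ w in (z+ε)..b, g w) = ∫ w in (0:ℝ)..b, g w :=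
    intervalIntegral.integral_add_adjacent_intervals
      (intInt hcont (le_refl 0) (by linarith [hz.1]) (by linarith))
      (intInt hcont (by linarith [hz.1]) (by linarith) (le_refl b))
  have h1 : 0 ≤ ∫ w in (0:ℝ)..z, g w :=
    intervalIntegral.integral_nonneg hz.1 (fun u hu => hnn u ⟨hu.1, le_trans hu.2 hz.2⟩)
  have h2 : 0 ≤ ∫ w in (z+ε)..b, g w :=
    intervalIntegral.integral_nonneg (by linarith) (fun u hu => hnn u ⟨by linarith [hu.1, hz.1], hu.2⟩)
  have h3 : (∫ w in z..(z+ε), (ε/2 : ℝ)) ≤ ∫ w in z..(z+ε), g w := by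
    apply intervalIntegral.integral_mono_on (by linarith) intervalIntegrable_const
      (intInt hcont hz.1 (by linarith) (by linarith))
    intro u hu
    have huI : u ∈ Set.Icc (0:ℝ) b := ⟨by linarith [hu.1, hz.1], by linarith [hu.2]⟩
    have h4 := hlip z hz u huI
    rw [abs_of_nonpos (by linarith [hu.1] : z - u ≤ 0)] at h4
    have h5 : g z - g u ≤ (u - z)/2 := le_trans (le_abs_self _) (by linarith)
    have h6 : u - z ≤ ε := by linarith [hu.2]
    linarith
  have h7 : (∫ w in z..(z+ε), (ε/2 : ℝ)) = ε * (ε/2) := by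
    rw [intervalIntegral.integral_const, smul_eq_mul]; ring
  nlinarith
set_option maxHeartbeats 1600000 in
theorem stmt7 (b : ℝ) (hb : 0 < b) (g : ℝ → ℝ)
    (hnonneg : ∀ z ∈ Set.Icc (0 : ℝ) b, 0 ≤ g z)
    (hanti : AntitoneOn g (Set.Icc (0 : ℝ) b))
    (hconv : ConvexOn ℝ (Set.Icc (0 : ℝ) b) g)
    (hgb : g b = 0)
    (hlip : ∀ z ∈ Set.Icc (0 : ℝ) b, ∀ w ∈ Set.Icc (0 : ℝ) b,
      |g z - g w| ≤ |z - w| / 2) :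
    ((⌊g 0 + 1 / 4⌋ : ℝ) + 2 * ∑ m ∈ Finset.Icc 1 ⌊b⌋, (⌊g (m : ℝ) + 1 / 4⌋ : ℝ)
        ≤ 2 * ∫ z in (0 : ℝ)..b, g z) ∧
      ((⌊g 0 + 1 / 4⌋ : ℝ) + 2 * ∑ m ∈ Finset.Icc 1 ⌊b⌋, (⌊g (m : ℝ) + 1 / 4⌋ : ℝ)
          = 2 * ∫ z in (0 : ℝ)..b, g z →
        ∀ z ∈ Set.Icc (0 : ℝ) b, g z = 0) := by
  have hcont := lip_cont hlip
  have h0I : (0:ℝ) ∈ Set.Icc (0:ℝ) b := ⟨le_refl 0, hb.le⟩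
  have hbI : b ∈ Set.Icc (0:ℝ) b := ⟨hb.le, le_refl b⟩
  have hT0 : 0 ≤ g 0 := hnonneg 0 h0I
  have hb2T : 2 * g 0 ≤ b := by
    have h1 := hlip 0 h0I b hbI
    rw [hgb, sub_zero, abs_of_nonneg hT0, abs_of_nonpos (by linarith : (0:ℝ) - b ≤ 0)] at h1
    linarith
  have hK0 : 0 ≤ ⌊g 0 + 1/4⌋ := Int.floor_nonneg.2 (by linarith)
  have hKle : ((⌊g 0 + 1/4⌋ : ℤ) : ℝ) ≤ g 0 + 1/4 := Int.floor_le _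
  have hKgt : g 0 + 1/4 < (⌊g 0 + 1/4⌋ : ℤ) + 1 := Int.lt_floor_add_one _
  obtain ⟨K, hKdef⟩ : ∃ K : ℤ, K = ⌊g 0 + 1/4⌋ := ⟨_, rfl⟩
  rw [← hKdef] at hK0 hKle hKgt ⊢
  have hgint : IntervalIntegrable g MeasureTheory.volume 0 b := intInt hcont le_rfl hb.le le_rfl
  have hInonneg : 0 ≤ ∫ z in (0:ℝ)..b, g z :=
    intervalIntegral.integral_nonneg hb.le (fun u hu => hnonneg u hu)
  by_cases hK1 : 1 ≤ K
  · -- main case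
    have hK1R : (1:ℝ) ≤ (K:ℝ) := by exact_mod_cast hK1
    have hT34 : 3/4 ≤ g 0 := by linarith
    -- crossing point machinery
    have cross : ∀ lam : ℝ, 0 < lam → lam ≤ g 0 → ∃ c : ℝ,
        (0 ≤ c ∧ c + 2*lam ≤ b) ∧
        (∀ z ∈ Set.Icc (0:ℝ) b, lam ≤ g z → z ≤ c) ∧
        (∀ z ∈ Set.Icc (0:ℝ) b, z ≤ c → lam ≤ g z) ∧
        2*(g 0 - lam) ≤ c := by
      intro lam hlam0 hlamT
      set S : Set ℝ := Set.Icc (0:ℝ) b ∩ g ⁻¹' Set.Ici lam with hS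
      have hSne : S.Nonempty := ⟨0, h0I, hlamT⟩
      have hSbdd : BddAbove S := ⟨b, fun x hx => hx.1.2⟩
      have hScl : IsClosed S :=
        hcont.preimage_isClosed_of_isClosed isClosed_Icc isClosed_Ici
      set c := sSup S with hc
      have hcS : c ∈ S := hScl.csSup_mem hSne hSbdd
      have hup : ∀ z ∈ Set.Icc (0:ℝ) b, lam ≤ g z → z ≤ c :=
        fun z hz hgz => le_csSup hSbdd ⟨hz, hgz⟩
      have hcI : c ∈ Set.Icc (0:ℝ) b := hcS.1
      have hgc : lam ≤ g c := hcS.2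
      have hlow : ∀ z ∈ Set.Icc (0:ℝ) b, z ≤ c → lam ≤ g z :=
        fun z hz hzc => le_trans hgc (hanti hz hcI hzc)
      have hcb : c + 2*lam ≤ b := by
        have h1 := hlip c hcI b hbI
        rw [hgb, sub_zero, abs_of_nonneg (by linarith : (0:ℝ) ≤ g c),
          abs_of_nonpos (by linarith [hcI.2] : c - b ≤ 0)] at h1
        linarith
      have hlower : 2*(g 0 - lam) ≤ c := by
        by_contra hcon
        push_neg at hcon
        set z0 := min (2*(g 0 - lam)) b with hz0
        have hz0I : z0 ∈ Set.Icc (0:ℝ) b := ⟨le_min (by linarith) hb.le, min_le_right _ _⟩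
        have hz0c : c < z0 := lt_min hcon (by linarith [hcI.2, hlam0] : c < b)
        have hgz0 : g z0 < lam := by
          by_contra hg2
          push_neg at hg2
          exact absurd (hup z0 hz0I hg2) (not_le.2 hz0c)
        have h1 := hlip 0 h0I z0 hz0I
        rw [abs_of_nonpos (by linarith [hz0I.1] : (0:ℝ) - z0 ≤ 0)] at h1
        have h2 : g 0 - g z0 ≤ (-(0 - z0))/2 := le_trans (le_abs_self _) h1
        have h3 : z0 ≤ 2*(g 0 - lam) := min_le_left _ _
        linarith
      exact ⟨c, ⟨hcI.1, hcb⟩, hup, hlow, hlower⟩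
    -- the crossing point at level 1/4
    obtain ⟨c', ⟨hc'0, hc'b⟩, hc'up, hc'low, hc'lower⟩ := cross (1/4) (by norm_num) (by linarith)
    have hc'pos : (0:ℝ) < c' := by linarith
    have hc'ltb : c' < b := by linarith
    have hgc' : 1/4 ≤ g c' := hc'low c' ⟨hc'pos.le, hc'ltb.le⟩ le_rfl
    obtain ⟨s', hs'1, hs'2, hs'line⟩ := sub_lemma hb hconv hlip hc'pos hc'ltb
    have hσ'pos : 0 < -s' := by
      rw [hgb] at hs'2
      have hdiv : (0 - g c')/(b - c') < 0 :=
        div_neg_of_neg_of_pos (by linarith) (by linarith)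
      linarith [lt_of_le_of_lt hs'2 hdiv]
    have hσ'le : -s' ≤ 1/2 := by linarith
    have hline' : ∀ z ∈ Set.Icc (0:ℝ) b, 1/4 - (-s') * (z - c') ≤ g z := by
      intro z hz
      have h1 := hs'line z hz
      have e : (-s') * (z - c') = -(s' * (z - c')) := by ring
      rw [e]
      linarith
    have hB1 : (∫ z in (0:ℝ)..b, max 0 (1/4 - g z)) ≤ (b - c')/4 - 1/16 :=
      b1_lemma hb hgb hcont hnonneg hc'pos.le hσ'pos hσ'le
        (fun z hz hzc => hc'low z hz hzc) hline'
    -- the key chain, for a number of levels n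
    have key : ∀ n : ℕ, ((n:ℝ) ≤ g 0 + 1/4) →
        (∀ m ∈ Finset.Icc (1:ℤ) ⌊b⌋, ⌊g (m:ℝ) + 1/4⌋ ≤ (n:ℤ)) →
        (∑ m ∈ Finset.Icc (1:ℤ) ⌊b⌋, (⌊g (m:ℝ) + 1/4⌋ : ℝ))
          ≤ (∫ z in (0:ℝ)..b, g z) - b/4
            - (∫ z in (0:ℝ)..b, max 0 (g z - 1/4 - (n:ℝ)))
            + (∫ z in (0:ℝ)..b, max 0 (1/4 - g z)) := by
      intro n hnT hbound
      have hcs : ∀ i : ℕ, ∃ ci : ℝ, i < n → (0 ≤ ci ∧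
          (∀ z ∈ Set.Icc (0:ℝ) b, (i:ℝ) + 3/4 ≤ g z → z ≤ ci) ∧
          ci ≤ ∫ z in (0:ℝ)..b, min 1 (max 0 (g z - ((i:ℝ) + 1/4)))) := by
        intro i
        by_cases hi : i < n
        · have hin1 : (i:ℝ) + 1 ≤ (n:ℝ) := by exact_mod_cast hi
          have hlam : (i:ℝ) + 3/4 ≤ g 0 := by linarith
          obtain ⟨ci, ⟨hci0, hcib⟩, hciup, hcilow, _⟩ :=
            cross ((i:ℝ) + 3/4) (by positivity) hlam
          refine ⟨ci, fun _ => ⟨hci0, hciup, ?_⟩⟩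
          rcases eq_or_lt_of_le hci0 with hz | hz
          · rw [← hz]
            exact intervalIntegral.integral_nonneg hb.le
              (fun u _ => le_min (by norm_num) (le_max_left _ _))
          · have hciltb : ci < b := by linarith [hcib]
            obtain ⟨s, hs1, hs2, hsline⟩ := sub_lemma hb hconv hlip hz hciltb
            have hgci : (i:ℝ) + 3/4 ≤ g ci := hcilow ci ⟨hci0, hciltb.le⟩ le_rfl
            have hspos : 0 < -s := by
              rw [hgb] at hs2
              have hdiv : (0 - g ci)/(b - ci) < 0 :=
                div_neg_of_neg_of_pos (by linarith) (by linarith)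
              linarith [lt_of_le_of_lt hs2 hdiv]
            have hline2 : ∀ z ∈ Set.Icc (0:ℝ) b, ((i:ℝ) + 3/4) - (-s) * (z - ci) ≤ g z := by
              intro z hzz
              have h1 := hsline z hzz
              have e : (-s) * (z - ci) = -(s * (z - ci)) := by ring
              rw [e]
              linarith
            have hres := clip_lemma hb hgb hcont hci0 hspos
              (by linarith : (1:ℝ)/2 ≤ (i:ℝ) + 3/4) hline2
            have e2 : (i:ℝ) + 3/4 - 1/2 = (i:ℝ) + 1/4 := by ring
            rw [e2] at hres
            exact hres
        · exact ⟨0, fun h => absurd h hi⟩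
      choose cf hcf using hcs
      -- counting step
      have hmemR : ∀ m ∈ Finset.Icc (1:ℤ) ⌊b⌋, (m:ℝ) ∈ Set.Icc (0:ℝ) b ∧ (1:ℝ) ≤ (m:ℝ) := by
        intro m hm
        rw [Finset.mem_Icc] at hm
        have hm1 : (1:ℝ) ≤ (m:ℝ) := by exact_mod_cast hm.1
        have hmb : (m:ℝ) ≤ b := le_trans (by exact_mod_cast hm.2) (Int.floor_le b)
        exact ⟨⟨by linarith, hmb⟩, hm1⟩
      have hcount : (∑ m ∈ Finset.Icc (1:ℤ) ⌊b⌋, ⌊g (m:ℝ) + 1/4⌋)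
          ≤ ∑ i ∈ Finset.range n, ⌊cf i⌋ := by
        have hrw : ∀ m ∈ Finset.Icc (1:ℤ) ⌊b⌋, ⌊g (m:ℝ) + 1/4⌋
            = ∑ i ∈ Finset.range n, (if (i:ℤ) < ⌊g (m:ℝ) + 1/4⌋ then (1:ℤ) else 0) := by
          intro m hm
          have h0 : 0 ≤ ⌊g (m:ℝ) + 1/4⌋ :=
            Int.floor_nonneg.2 (by linarith [hnonneg _ (hmemR m hm).1])
          rw [count_lemma _ h0 n, min_eq_left (hbound m hm)]
        rw [Finset.sum_congr rfl hrw, Finset.sum_comm]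
        apply Finset.sum_le_sum
        intro i hi
        have hin : i < n := Finset.mem_range.1 hi
        obtain ⟨hci0, hciup, _⟩ := hcf i hin
        have hsubset : (Finset.Icc (1:ℤ) ⌊b⌋).filter (fun m : ℤ => (i:ℤ) < ⌊g (m:ℝ) + 1/4⌋)
            ⊆ Finset.Icc (1:ℤ) ⌊cf i⌋ := by
          intro m hm
          rw [Finset.mem_filter] at hm
          obtain ⟨hm1, hm2⟩ := hm
          have h3 : ((i:ℤ) + 1 : ℝ) ≤ g (m:ℝ) + 1/4 := by
            have := Int.le_floor.1 (by omega : (i:ℤ) + 1 ≤ ⌊g (m:ℝ) + 1/4⌋)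
            exact_mod_cast this
          have h4 : (i:ℝ) + 3/4 ≤ g (m:ℝ) := by push_cast at h3; linarith
          have h5 : (m:ℝ) ≤ cf i := hciup (m:ℝ) (hmemR m hm1).1 h4
          rw [Finset.mem_Icc]
          refine ⟨(Finset.mem_Icc.1 hm1).1, Int.le_floor.2 h5⟩
        calc (∑ m ∈ Finset.Icc (1:ℤ) ⌊b⌋, (if (i:ℤ) < ⌊g (m:ℝ) + 1/4⌋ then (1:ℤ) else 0))
            = (((Finset.Icc (1:ℤ) ⌊b⌋).filter (fun m : ℤ => (i:ℤ) < ⌊g (m:ℝ) + 1/4⌋)).card : ℤ) := by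
              rw [Finset.sum_boole]
          _ ≤ ((Finset.Icc (1:ℤ) ⌊cf i⌋).card : ℤ) := by
              exact_mod_cast Finset.card_le_card hsubset
          _ ≤ ⌊cf i⌋ := by
              have hfl : 0 ≤ ⌊cf i⌋ := Int.floor_nonneg.2 hci0
              rw [Int.card_Icc]
              omega
      -- from counting to integrals
      have hsum1 : (∑ m ∈ Finset.Icc (1:ℤ) ⌊b⌋, (⌊g (m:ℝ) + 1/4⌋ : ℝ))
          ≤ ∑ i ∈ Finset.range n, cf i := by
        have h1 : (∑ m ∈ Finset.Icc (1:ℤ) ⌊b⌋, (⌊g (m:ℝ) + 1/4⌋ : ℝ))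
            ≤ ∑ i ∈ Finset.range n, (⌊cf i⌋ : ℝ) := by
          push_cast
          exact_mod_cast hcount
        exact le_trans h1 (Finset.sum_le_sum (fun i _ => Int.floor_le _))
      have hclipint : ∀ i ∈ Finset.range n,
          IntervalIntegrable (fun z => min 1 (max 0 (g z - ((i:ℝ) + 1/4))))
            MeasureTheory.volume 0 b :=
        fun i _ => intInt (contClip hcont _) le_rfl hb.le le_rfl
      have hsumc : (∑ i ∈ Finset.range n, cf i)
          ≤ ∫ z in (0:ℝ)..b, ∑ i ∈ Finset.range n, min 1 (max 0 (g z - ((i:ℝ) + 1/4))) := by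
        rw [intervalIntegral.integral_finset_sum hclipint]
        exact Finset.sum_le_sum (fun i hi => (hcf i (Finset.mem_range.1 hi)).2.2)
      have hid : (∫ z in (0:ℝ)..b, ∑ i ∈ Finset.range n, min 1 (max 0 (g z - ((i:ℝ) + 1/4))))
          = (∫ z in (0:ℝ)..b, g z) - b/4
            - (∫ z in (0:ℝ)..b, max 0 (g z - 1/4 - (n:ℝ)))
            + (∫ z in (0:ℝ)..b, max 0 (1/4 - g z)) := by
        have hcongr : ∀ z ∈ Set.uIcc (0:ℝ) b,
            (∑ i ∈ Finset.range n, min 1 (max 0 (g z - ((i:ℝ) + 1/4))))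
              = g z - 1/4 - max 0 (g z - 1/4 - (n:ℝ)) + max 0 (1/4 - g z) :=
          fun z _ => clip_sum (g z) n
        rw [intervalIntegral.integral_congr hcongr]
        have hIc : IntervalIntegrable (fun _ : ℝ => (1/4:ℝ)) MeasureTheory.volume 0 b :=
          intervalIntegrable_const
        have hIM : IntervalIntegrable (fun z => max 0 (g z - 1/4 - (n:ℝ)))
            MeasureTheory.volume 0 b :=
          intInt (continuousOn_const.sup ((hcont.sub continuousOn_const).sub continuousOn_const))
            le_rfl hb.le le_rfl
        have hIP : IntervalIntegrable (fun z => max 0 (1/4 - g z)) MeasureTheory.volume 0 b :=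
          intInt (contMax0' hcont _) le_rfl hb.le le_rfl
        rw [intervalIntegral.integral_add ((hgint.sub hIc).sub hIM) hIP,
          intervalIntegral.integral_sub (hgint.sub hIc) hIM,
          intervalIntegral.integral_sub hgint hIc]
        simp [intervalIntegral.integral_const]
        ring
      linarith [hsum1, hsumc, hid.le, hid.ge]
    -- level K - 1/4 crossing point
    obtain ⟨cK, ⟨hcK0, hcKb⟩, hcKup, hcKlow, hcKlower⟩ :=
      cross ((K:ℝ) - 1/4) (by linarith) (by linarith)
    have hgcK : (K:ℝ) - 1/4 ≤ g cK := hcKlow cK ⟨hcK0, by linarith [hcKb]⟩ le_rfl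
    have hmain : ((K:ℤ):ℝ) + 2 * (∑ m ∈ Finset.Icc (1:ℤ) ⌊b⌋, (⌊g (m:ℝ) + 1/4⌋ : ℝ))
        ≤ 2 * (∫ z in (0:ℝ)..b, g z) - 1/8 := by
      rcases lt_or_ge cK 1 with hcase | hcase
      · -- case (ii) : cK < 1
        obtain ⟨n, hn⟩ : ∃ n : ℕ, n = (K - 1).toNat := ⟨_, rfl⟩
        have hnZ : (n:ℤ) = K - 1 := by rw [hn]; exact Int.toNat_of_nonneg (by omega)
        have hnR : (n:ℝ) = (K:ℝ) - 1 := by exact_mod_cast hnZ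
        have hbound : ∀ m ∈ Finset.Icc (1:ℤ) ⌊b⌋, ⌊g (m:ℝ) + 1/4⌋ ≤ (n:ℤ) := by
          intro m hm
          rw [hnZ]
          by_contra hcon
          push_neg at hcon
          have h1 : (K:ℤ) ≤ ⌊g (m:ℝ) + 1/4⌋ := by omega
          have h2 : ((K:ℤ):ℝ) ≤ g (m:ℝ) + 1/4 := by
            have := Int.le_floor.1 h1
            exact_mod_cast this
          rw [Finset.mem_Icc] at hm
          have hm1 : (1:ℝ) ≤ (m:ℝ) := by exact_mod_cast hm.1
          have hmb : (m:ℝ) ≤ b := le_trans (by exact_mod_cast hm.2) (Int.floor_le b)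
          have h3 : (m:ℝ) ≤ cK := hcKup (m:ℝ) ⟨by linarith, hmb⟩ (by linarith)
          linarith
        have hkey := key n (by rw [hnR]; linarith) hbound
        -- B2 bound
        have hTz : ∀ z ∈ Set.Icc (0:ℝ) b, g 0 - z/2 ≤ g z := by
          intro z hz
          have h1 := hlip 0 h0I z hz
          rw [abs_of_nonpos (by linarith [hz.1] : (0:ℝ) - z ≤ 0)] at h1
          have h2 : g 0 - g z ≤ (-(0 - z))/2 := le_trans (le_abs_self _) h1
          linarith
        obtain ⟨h, hh⟩ : ∃ h : ℝ, h = g 0 - 1/4 - (n:ℝ) := ⟨_, rfl⟩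
        have hh12 : 1/2 ≤ h := by rw [hh, hnR]; linarith
        have hhb2 : 2*h ≤ b := by rw [hh, hnR]; linarith
        have hB2 : h^2 ≤ ∫ z in (0:ℝ)..b, max 0 (g z - 1/4 - (n:ℝ)) := by
          have he : (fun z => max 0 (g z - 1/4 - (n:ℝ)))
              = (fun z => max 0 (g z - (1/4 + (n:ℝ)))) := by
            funext z; congr 1; ring
          rw [he]
          apply b2_lemma hb hcont (by linarith) hhb2
          intro z hz
          have := hTz z hz
          rw [hh]
          linarith
        have hq : 1 ≤ 2*h^2 + h := by nlinarith
        linarith [hkey, hB1, hB2, hc'lower, hq]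
      · -- case (i) : cK ≥ 1
        obtain ⟨n, hn⟩ : ∃ n : ℕ, n = K.toNat := ⟨_, rfl⟩
        have hnZ : (n:ℤ) = K := by rw [hn]; exact Int.toNat_of_nonneg hK0
        have hnR : (n:ℝ) = (K:ℝ) := by exact_mod_cast hnZ
        have hbound : ∀ m ∈ Finset.Icc (1:ℤ) ⌊b⌋, ⌊g (m:ℝ) + 1/4⌋ ≤ (n:ℤ) := by
          intro m hm
          rw [hnZ, hKdef]
          apply Int.floor_le_floor
          rw [Finset.mem_Icc] at hm
          have hm1 : (1:ℝ) ≤ (m:ℝ) := by exact_mod_cast hm.1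
          have hmb : (m:ℝ) ≤ b := le_trans (by exact_mod_cast hm.2) (Int.floor_le b)
          have := hanti h0I ⟨by linarith, hmb⟩ (by linarith)
          linarith
        have hkey := key n (by rw [hnR]; linarith) hbound
        have hI3 : 0 ≤ ∫ z in (0:ℝ)..b, max 0 (g z - 1/4 - (n:ℝ)) :=
          intervalIntegral.integral_nonneg hb.le (fun u _ => le_max_left _ _)
        -- separation: c' ≥ cK + 2K - 1
        have hsep : cK + 2*(K:ℝ) - 1 ≤ c' := by
          by_contra hcon
          push_neg at hcon
          set z0 := min (cK + 2*(K:ℝ) - 1) b with hz0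
          have hz0I : z0 ∈ Set.Icc (0:ℝ) b :=
            ⟨le_min (by linarith) hb.le, min_le_right _ _⟩
          have hz0c : c' < z0 := lt_min hcon hc'ltb
          have hcKc' : cK ≤ c' := hc'up cK ⟨hcK0, by linarith [hcKb]⟩ (by linarith)
          have hgz0 : g z0 < 1/4 := by
            by_contra hg2
            push_neg at hg2
            exact absurd (hc'up z0 hz0I hg2) (not_le.2 hz0c)
          have h1 := hlip cK ⟨hcK0, by linarith [hcKb]⟩ z0 hz0I
          rw [abs_of_nonpos (by linarith : cK - z0 ≤ 0)] at h1
          have h2 : g cK - g z0 ≤ (-(cK - z0))/2 := le_trans (le_abs_self _) h1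
          have h3 : z0 ≤ cK + 2*(K:ℝ) - 1 := min_le_left _ _
          linarith
        linarith [hkey, hB1, hI3, hsep, hcase]
    constructor
    · linarith [hmain]
    · intro heq
      exfalso
      linarith [hmain, heq.le, heq.ge]
  · -- trivial case K = 0
    have hKz : K = 0 := by omega
    have hKzR : ((K:ℤ):ℝ) = 0 := by exact_mod_cast hKz
    have hTlt : g 0 + 1/4 < 1 := by
      have := hKgt
      rw [hKz] at this
      push_cast at this
      linarith
    have hsum0 : ∀ m ∈ Finset.Icc (1:ℤ) ⌊b⌋, (⌊g (m:ℝ) + 1/4⌋ : ℝ) = 0 := by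
      intro m hm
      rw [Finset.mem_Icc] at hm
      have hm1 : (1:ℝ) ≤ (m:ℝ) := by exact_mod_cast hm.1
      have hmb : (m:ℝ) ≤ b := le_trans (by exact_mod_cast hm.2) (Int.floor_le b)
      have hmI : (m:ℝ) ∈ Set.Icc (0:ℝ) b := ⟨by linarith, hmb⟩
      have h1 : g (m:ℝ) ≤ g 0 := hanti h0I hmI (by linarith)
      have h2 : 0 ≤ g (m:ℝ) := hnonneg _ hmI
      have h3 : ⌊g (m:ℝ) + 1/4⌋ = 0 := by
        apply Int.floor_eq_zero_iff.2
        constructor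
        · linarith
        · linarith
      rw [h3]
      norm_num
    have hsums : (∑ m ∈ Finset.Icc (1:ℤ) ⌊b⌋, (⌊g (m:ℝ) + 1/4⌋ : ℝ)) = 0 := by
      rw [Finset.sum_congr rfl hsum0, Finset.sum_const, smul_zero]
    constructor
    · rw [hsums, hKzR]
      linarith
    · intro heq
      rw [hsums, hKzR] at heq
      have hint0 : (∫ z in (0:ℝ)..b, g z) = 0 := by linarith
      exact zero_lemma hb hnonneg hlip hgb hint0
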